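/- Consider a network of n agents on a directed graph G where each agent i runs the min-rule learning algorithm: local beliefs updated by Bayes' rule from i.i.d. private signals with strictly positive likelihoods, and actual beliefs updated as the normalized minimum of its local belief and neighbors' actual beliefs. Suppose (i) for every pair of distinct hypotheses the source set (agents whose marginal likelihoods under the two hypotheses have positive KL-divergence) is nonempty, (ii) for every such pair, all non-source agents are reachable via directed paths from the source set, and (iii) all prior local and actual beliefs are strictly positive. Then for every agent i, μ_{i,t}(θ*) → 1 almost surely, where θ* is the true state generating the signals. -/

import Mathlib

open Finset MeasureTheory ProbabilityTheory Filter Topology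

lemma gibbs_pos' {S : Type*} [Fintype S] {f g : S → ℝ} (hf : ∀ w, 0 < f w) (hg : ∀ w, 0 < g w)
    (hfs : ∑ w, f w = 1) (hgs : ∑ w, g w = 1) {w0 : S} (hne : f w0 ≠ g w0) :
    0 < ∑ w, f w * Real.log (f w / g w) := by
  have key : ∀ w : S, f w - g w ≤ f w * Real.log (f w / g w) := by
    intro w
    have h1 : Real.log (g w / f w) ≤ g w / f w - 1 :=
      Real.log_le_sub_one_of_pos (div_pos (hg w) (hf w))
    have h2 : Real.log (f w / g w) = - Real.log (g w / f w) := by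
      rw [← Real.log_inv]; congr 1; field_simp
    have h3 : f w * (g w / f w) = g w := by
      rw [mul_comm, div_mul_cancel₀ _ (hf w).ne']
    have h4 := mul_le_mul_of_nonneg_left h1 (hf w).le
    rw [h2]; nlinarith [hf w, hg w]
  have keys : f w0 - g w0 < f w0 * Real.log (f w0 / g w0) := by
    have hne1 : g w0 / f w0 ≠ 1 := by
      intro h; apply hne; rw [div_eq_one_iff_eq (hf w0).ne'] at h; exact h.symm
    have h1 : Real.log (g w0 / f w0) < g w0 / f w0 - 1 :=
      Real.log_lt_sub_one_of_pos (div_pos (hg w0) (hf w0)) hne1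
    have h2 : Real.log (f w0 / g w0) = - Real.log (g w0 / f w0) := by
      rw [← Real.log_inv]; congr 1; field_simp
    have h3 : f w0 * (g w0 / f w0) = g w0 := by
      rw [mul_comm, div_mul_cancel₀ _ (hf w0).ne']
    have h4 := mul_lt_mul_of_pos_left h1 (hf w0)
    rw [h2]; nlinarith [hf w0, hg w0]
  have h0 : (0:ℝ) = ∑ w, (f w - g w) := by rw [Finset.sum_sub_distrib, hfs, hgs]; ring
  rw [h0]
  exact Finset.sum_lt_sum (fun w _ => key w) ⟨w0, Finset.mem_univ _, keys⟩

lemma slln_aux' {Ω : Type*} [MeasurableSpace Ω] (Pm : Measure Ω) [IsProbabilityMeasure Pm]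
    {ι : Type*} {Sig : ι → Type*} [∀ i, Fintype (Sig i)] [∀ i, MeasurableSpace (Sig i)]
    [∀ i, MeasurableSingletonClass (Sig i)]
    (s : ℕ → Ω → ∀ i, Sig i) (hmeas : ∀ t, Measurable (s t))
    (hindep : iIndepFun s Pm)
    (j : ι) (g : Sig j → ℝ) (lstar : Sig j → ℝ)
    (hlaw : ∀ t w, Pm {ω | s t ω j = w} = ENNReal.ofReal (lstar w))
    (hpos : ∀ w, 0 ≤ lstar w) :
    ∀ᵐ ω ∂Pm, Tendsto (fun n : ℕ => (n:ℝ)⁻¹ * ∑ k ∈ Finset.range n, g (s (k+1) ω j)) atTop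
      (𝓝 (∑ w, lstar w * g w)) := by
  set X : ℕ → Ω → ℝ := fun k ω => g (s (k+1) ω j) with hX
  have hY : ∀ t, Measurable (fun ω => s t ω j) := fun t => (measurable_pi_apply j).comp (hmeas t)
  have hgm : Measurable g := measurable_of_countable g
  have hXmeas : ∀ k, Measurable (X k) := fun k => hgm.comp (hY (k + 1))
  have hYmap : ∀ t, Measure.map (fun ω => s t ω j) Pm = Measure.map (fun ω => s 1 ω j) Pm := by
    intro t
    refine Measure.ext_of_singleton fun w => ?_
    rw [Measure.map_apply (hY t) (measurableSet_singleton w),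
      Measure.map_apply (hY 1) (measurableSet_singleton w)]
    have h1 : (fun ω => s t ω j) ⁻¹' {w} = {ω | s t ω j = w} := by
      ext ω; simp [Set.mem_preimage]
    have h2 : (fun ω => s 1 ω j) ⁻¹' {w} = {ω | s 1 ω j = w} := by
      ext ω; simp [Set.mem_preimage]
    rw [h1, h2, hlaw t w, hlaw 1 w]
  have hident : ∀ k, IdentDistrib (X k) (X 0) Pm Pm := by
    intro k
    have hYid : IdentDistrib (fun ω => s (k+1) ω j) (fun ω => s 1 ω j) Pm Pm :=
      ⟨(hY (k+1)).aemeasurable, (hY 1).aemeasurable, hYmap (k+1)⟩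
    exact hYid.comp hgm
  have hpind : Pairwise (Function.onFun (fun x1 x2 => IndepFun x1 x2 Pm) X) := by
    intro k k' hkk'
    have h1 : IndepFun (s (k+1)) (s (k'+1)) Pm := hindep.indepFun (by omega)
    exact h1.comp (φ := fun v : ∀ i, Sig i => g (v j)) (ψ := fun v : ∀ i, Sig i => g (v j))
      (hgm.comp (measurable_pi_apply j)) (hgm.comp (measurable_pi_apply j))
  have hmap1 : IsProbabilityMeasure (Measure.map (fun ω => s 1 ω j) Pm) :=
    Measure.isProbabilityMeasure_map (hY 1).aemeasurable
  have hint : Integrable (X 0) Pm := by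
    have h1 : Integrable g (Measure.map (fun ω => s 1 ω j) Pm) := Integrable.of_finite
    exact (integrable_map_measure hgm.aestronglyMeasurable (hY 1).aemeasurable).mp h1
  have hmean : ∫ x, X 0 x ∂Pm = ∑ w, lstar w * g w := by
    have h1 : ∫ x, X 0 x ∂Pm = ∫ y, g y ∂(Measure.map (fun ω => s 1 ω j) Pm) :=
      (integral_map (hY 1).aemeasurable hgm.aestronglyMeasurable).symm
    rw [h1, integral_fintype (f := g) Integrable.of_finite]
    refine Finset.sum_congr rfl fun w _ => ?_
    rw [measureReal_def, Measure.map_apply (hY 1) (measurableSet_singleton w)]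
    have h2 : (fun ω => s 1 ω j) ⁻¹' {w} = {ω | s 1 ω j = w} := by
      ext ω; simp [Set.mem_preimage]
    rw [h2, hlaw 1 w, ENNReal.toReal_ofReal (hpos w), smul_eq_mul]
  have hsl := strong_law_ae X hint hpind hident
  rw [hmean] at hsl
  filter_upwards [hsl] with ω hω
  simpa [smul_eq_mul] using hω

/-- Consistency of the min-rule learning algorithm: under global identifiability (nonempty
source sets), reachability of non-source agents from source sets, and positive priors, every
agent's actual belief on the true state converges to one almost surely. -/
theorem stmt18 {Ω : Type*} [MeasurableSpace Ω] (Pm : Measure Ω) [IsProbabilityMeasure Pm]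
    {ι Θ : Type*} [Fintype ι] [Fintype Θ]
    {Sig : ι → Type*} [∀ i, Fintype (Sig i)] [∀ i, MeasurableSpace (Sig i)]
    [∀ i, MeasurableSingletonClass (Sig i)]
    (Nbr : ι → Finset ι) (hNbr : ∀ i, (Nbr i).Nonempty)
    (l : ∀ i, Sig i → Θ → ℝ) (hl : ∀ i w θ, 0 < l i w θ)
    (hlsum : ∀ i θ, ∑ w, l i w θ = 1)
    (θstar : Θ)
    (s : ℕ → Ω → ∀ i, Sig i) (hmeas : ∀ t, Measurable (s t))
    (hindep : iIndepFun s Pm)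
    (hlaw : ∀ t i w, Pm {ω | s t ω i = w} = ENNReal.ofReal (l i w θstar))
    (π μ : ℕ → ι → Θ → Ω → ℝ)
    (hπ0 : ∀ i θ ω, 0 < π 0 i θ ω) (hμ0 : ∀ i θ ω, 0 < μ 0 i θ ω)
    (hπ0sum : ∀ i ω, ∑ θ, π 0 i θ ω = 1) (hμ0sum : ∀ i ω, ∑ θ, μ 0 i θ ω = 1)
    (hπrec : ∀ t i θ ω, π (t + 1) i θ ω =
      l i (s (t + 1) ω i) θ * π t i θ ω / ∑ p, l i (s (t + 1) ω i) p * π t i p ω)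
    (hμrec : ∀ t i θ ω, μ (t + 1) i θ ω =
      min ((Nbr i).inf' (hNbr i) fun j => μ t j θ ω) (π (t + 1) i θ ω) /
        ∑ p, min ((Nbr i).inf' (hNbr i) fun j => μ t j p ω) (π (t + 1) i p ω))
    -- (i) for every pair of distinct hypotheses, the source set is nonempty
    (hsource : ∀ θp θq : Θ, θp ≠ θq →
      ∃ i : ι, 0 < ∑ w, l i w θp * Real.log (l i w θp / l i w θq))
    -- (ii) every non-source agent is reachable from the source set
    (hreach : ∀ θp θq : Θ, θp ≠ θq → ∀ i : ι,
      ¬ (0 < ∑ w, l i w θp * Real.log (l i w θp / l i w θq)) →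
      ∃ j : ι, (0 < ∑ w, l j w θp * Real.log (l j w θp / l j w θq)) ∧
        Relation.ReflTransGen (fun a b => a ∈ Nbr b) j i) :
    ∀ i : ι, ∀ᵐ ω ∂Pm, Tendsto (fun t => μ t i θstar ω) atTop (nhds 1) := by
  classical
  intro i
  have hιne : Nonempty ι := ⟨i⟩
  have hΘne : Nonempty Θ := ⟨θstar⟩
  -- positivity and normalization of beliefs at all times
  have hπpos : ∀ t j θ ω, 0 < π t j θ ω := by
    intro t
    induction t with
    | zero => exact hπ0
    | succ t ih =>
      intro j θ ω
      rw [hπrec]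
      exact div_pos (mul_pos (hl _ _ _) (ih j θ ω))
        (Finset.sum_pos (fun p _ => mul_pos (hl _ _ _) (ih j p ω)) Finset.univ_nonempty)
  have hπsum : ∀ t j ω, ∑ θ, π t j θ ω = 1 := by
    intro t
    induction t with
    | zero => exact hπ0sum
    | succ t _ =>
      intro j ω
      have hZ : 0 < ∑ p, l j (s (t+1) ω j) p * π t j p ω :=
        Finset.sum_pos (fun p _ => mul_pos (hl _ _ _) (hπpos t j p ω)) Finset.univ_nonempty
      simp only [hπrec]
      rw [← Finset.sum_div, div_self hZ.ne']
  have hμpos : ∀ t j θ ω, 0 < μ t j θ ω := by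
    intro t
    induction t with
    | zero => exact hμ0
    | succ t ih =>
      intro j θ ω
      rw [hμrec]
      have hnum : ∀ p, 0 < min ((Nbr j).inf' (hNbr j) fun k => μ t k p ω) (π (t+1) j p ω) :=
        fun p => lt_min ((Finset.lt_inf'_iff _).2 fun k _ => ih k p ω) (hπpos _ _ _ _)
      exact div_pos (hnum θ) (Finset.sum_pos (fun p _ => hnum p) Finset.univ_nonempty)
  have hμsum : ∀ t j ω, ∑ θ, μ t j θ ω = 1 := by
    intro t j ω
    cases t with
    | zero => exact hμ0sum j ω
    | succ t =>
      have hnum : ∀ p, 0 < min ((Nbr j).inf' (hNbr j) fun k => μ t k p ω) (π (t+1) j p ω) :=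
        fun p => lt_min ((Finset.lt_inf'_iff _).2 fun k _ => hμpos t k p ω) (hπpos _ _ _ _)
      have hZ : 0 < ∑ p, min ((Nbr j).inf' (hNbr j) fun k => μ t k p ω) (π (t+1) j p ω) :=
        Finset.sum_pos (fun p _ => hnum p) Finset.univ_nonempty
      simp only [hμrec]
      rw [← Finset.sum_div, div_self hZ.ne']
  -- log-likelihood-ratio increments
  set X : ι → Θ → ℕ → Ω → ℝ :=
    fun j p k ω => Real.log (l j (s (k+1) ω j) p / l j (s (k+1) ω j) θstar) with hXdef
  -- belief ratio formula
  have hRform : ∀ j p ω t, π t j p ω / π t j θstar ω =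
      π 0 j p ω / π 0 j θstar ω * Real.exp (∑ k ∈ Finset.range t, X j p k ω) := by
    intro j p ω t
    induction t with
    | zero => simp
    | succ t ih =>
      rw [Finset.sum_range_succ, Real.exp_add, ← mul_assoc, ← ih]
      have hexp : Real.exp (X j p t ω) = l j (s (t+1) ω j) p / l j (s (t+1) ω j) θstar :=
        Real.exp_log (div_pos (hl _ _ _) (hl _ _ _))
      rw [hπrec t j p ω, hπrec t j θstar ω, hexp]
      have hZ : (0:ℝ) < ∑ q, l j (s (t+1) ω j) q * π t j q ω :=
        Finset.sum_pos (fun q _ => mul_pos (hl _ _ _) (hπpos t j q ω)) Finset.univ_nonempty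
      have h1 : l j (s (t+1) ω j) θstar ≠ 0 := (hl _ _ _).ne'
      have h2 : π t j θstar ω ≠ 0 := (hπpos t j θstar ω).ne'
      field_simp
  -- the almost-sure SLLN event
  have hSLLN : ∀ j p, ∀ᵐ ω ∂Pm,
      Tendsto (fun n : ℕ => (n:ℝ)⁻¹ * ∑ k ∈ Finset.range n, X j p k ω) atTop
        (𝓝 (∑ w, l j w θstar * Real.log (l j w p / l j w θstar))) := by
    intro j p
    exact slln_aux' Pm s hmeas hindep j (fun w => Real.log (l j w p / l j w θstar))
      (fun w => l j w θstar) (fun t w => hlaw t j w) (fun w => (hl j w θstar).le)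
  have hAE : ∀ᵐ ω ∂Pm, ∀ j p,
      Tendsto (fun n : ℕ => (n:ℝ)⁻¹ * ∑ k ∈ Finset.range n, X j p k ω) atTop
        (𝓝 (∑ w, l j w θstar * Real.log (l j w p / l j w θstar))) := by
    rw [ae_all_iff]
    intro j
    rw [ae_all_iff]
    exact hSLLN j
  filter_upwards [hAE] with ω hω
  -- sign of the limiting mean
  have hmD : ∀ j p, ∑ w, l j w θstar * Real.log (l j w p / l j w θstar)
      = -∑ w, l j w θstar * Real.log (l j w θstar / l j w p) := by
    intro j p
    rw [← Finset.sum_neg_distrib]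
    refine Finset.sum_congr rfl fun w _ => ?_
    rw [Real.log_div (hl _ _ _).ne' (hl _ _ _).ne', Real.log_div (hl _ _ _).ne' (hl _ _ _).ne']
    ring
  -- every ratio sequence converges
  have hratio : ∀ j p, ∃ L, Tendsto (fun t => π t j p ω / π t j θstar ω) atTop (𝓝 L) := by
    intro j p
    by_cases hD : 0 < ∑ w, l j w θstar * Real.log (l j w θstar / l j w p)
    · refine ⟨0, ?_⟩
      have hmneg : ∑ w, l j w θstar * Real.log (l j w p / l j w θstar) < 0 := by
        rw [hmD]; linarith
      have h2 : Tendsto (fun n : ℕ => ∑ k ∈ Finset.range n, X j p k ω) atTop atBot := by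
        have h3 : Tendsto
            (fun n : ℕ => (n:ℝ) * ((n:ℝ)⁻¹ * ∑ k ∈ Finset.range n, X j p k ω)) atTop atBot :=
          Tendsto.atTop_mul_neg hmneg tendsto_natCast_atTop_atTop (hω j p)
        refine Tendsto.congr' ?_ h3
        filter_upwards [eventually_ge_atTop 1] with n hn
        have hn0 : (n:ℝ) ≠ 0 := by
          have : (0:ℕ) < n := hn
          exact_mod_cast this.ne'
        field_simp
      have h5 : Tendsto (fun n : ℕ => Real.exp (∑ k ∈ Finset.range n, X j p k ω)) atTop (𝓝 0) :=
        Real.tendsto_exp_atBot.comp h2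
      have h6 := h5.const_mul (π 0 j p ω / π 0 j θstar ω)
      simp only [mul_zero] at h6
      exact h6.congr fun t => (hRform j p ω t).symm
    · have heq : ∀ w, l j w θstar = l j w p := by
        by_contra hc
        push_neg at hc
        obtain ⟨w, hw⟩ := hc
        exact hD (gibbs_pos' (fun w => hl j w θstar) (fun w => hl j w p)
          (hlsum j θstar) (hlsum j p) hw)
      have hX0 : ∀ k, X j p k ω = 0 := by
        intro k
        have h := heq (s (k+1) ω j)
        simp only [hXdef, ← h, div_self (hl j (s (k+1) ω j) θstar).ne', Real.log_one]
      refine ⟨π 0 j p ω / π 0 j θstar ω, ?_⟩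
      have hconst : ∀ t, π t j p ω / π t j θstar ω = π 0 j p ω / π 0 j θstar ω := by
        intro t
        rw [hRform]
        simp [hX0]
      simp only [hconst]
      exact tendsto_const_nhds
  -- uniform positive lower bound on π at θstar
  have hαex : ∀ j, ∃ a, 0 < a ∧ ∀ t, a ≤ π t j θstar ω := by
    intro j
    have hM : ∀ p, ∃ M, ∀ t, π t j p ω / π t j θstar ω ≤ M := by
      intro p
      obtain ⟨L, hL⟩ := hratio j p
      obtain ⟨M, hMub⟩ := hL.bddAbove_range
      exact ⟨M, fun t => hMub (Set.mem_range_self t)⟩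
    choose M hMub using hM
    have hMsumpos : 0 < ∑ p, M p := by
      have hpos0 : 0 < ∑ p, π 0 j p ω / π 0 j θstar ω :=
        Finset.sum_pos (fun p _ => div_pos (hπpos 0 j p ω) (hπpos 0 j θstar ω))
          Finset.univ_nonempty
      exact lt_of_lt_of_le hpos0 (Finset.sum_le_sum fun p _ => hMub p 0)
    refine ⟨(∑ p, M p)⁻¹, inv_pos.2 hMsumpos, fun t => ?_⟩
    have hrpos : 0 < ∑ p, π t j p ω / π t j θstar ω :=
      Finset.sum_pos (fun p _ => div_pos (hπpos t j p ω) (hπpos t j θstar ω))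
        Finset.univ_nonempty
    have hsum1 : (∑ p, π t j p ω / π t j θstar ω) * π t j θstar ω = 1 := by
      rw [Finset.sum_mul]
      have he : ∀ p ∈ Finset.univ, (π t j p ω / π t j θstar ω) * π t j θstar ω = π t j p ω :=
        fun p _ => div_mul_cancel₀ _ (hπpos t j θstar ω).ne'
      rw [Finset.sum_congr rfl he, hπsum]
    have hπeq : π t j θstar ω = 1 / (∑ p, π t j p ω / π t j θstar ω) :=
      eq_one_div_of_mul_eq_one_right hsum1
    rw [hπeq, one_div]
    exact inv_anti₀ hrpos (Finset.sum_le_sum fun p _ => hMub p t)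
  choose aa haa0 haalb using hαex
  set αl : ℝ := Finset.univ.inf' Finset.univ_nonempty aa with hαldef
  have hα0 : 0 < αl := (Finset.lt_inf'_iff _).2 fun j _ => haa0 j
  have hαlb : ∀ j t, αl ≤ π t j θstar ω :=
    fun j t => le_trans (Finset.inf'_le aa (Finset.mem_univ j)) (haalb j t)
  set γ : ℝ := min (Finset.univ.inf' Finset.univ_nonempty fun j => μ 0 j θstar ω) αl with hγdef
  have hγ0 : 0 < γ := lt_min ((Finset.lt_inf'_iff _).2 fun j _ => hμ0 j θstar ω) hα0
  -- uniform lower bound on μ at θstar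
  have hμlb : ∀ t j, γ ≤ μ t j θstar ω := by
    intro t
    induction t with
    | zero =>
      intro j
      exact le_trans (min_le_left _ _) (Finset.inf'_le _ (Finset.mem_univ j))
    | succ t ih =>
      intro j
      rw [hμrec]
      have hterm : ∀ p, 0 < min ((Nbr j).inf' (hNbr j) fun k => μ t k p ω) (π (t+1) j p ω) :=
        fun p => lt_min ((Finset.lt_inf'_iff _).2 fun k _ => hμpos t k p ω) (hπpos _ _ _ _)
      have hZpos : 0 < ∑ p, min ((Nbr j).inf' (hNbr j) fun k => μ t k p ω) (π (t+1) j p ω) :=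
        Finset.sum_pos (fun p _ => hterm p) Finset.univ_nonempty
      have hZle1 : (∑ p, min ((Nbr j).inf' (hNbr j) fun k => μ t k p ω) (π (t+1) j p ω)) ≤ 1 := by
        calc (∑ p, min ((Nbr j).inf' (hNbr j) fun k => μ t k p ω) (π (t+1) j p ω))
            ≤ ∑ p, π (t+1) j p ω := Finset.sum_le_sum fun p _ => min_le_right _ _
          _ = 1 := hπsum (t+1) j ω
      have hnum : γ ≤ min ((Nbr j).inf' (hNbr j) fun k => μ t k θstar ω) (π (t+1) j θstar ω) :=
        le_min (Finset.le_inf' _ _ fun k _ => ih k)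
          (le_trans (min_le_right _ _) (hαlb j (t+1)))
      rw [le_div_iff₀ hZpos]
      calc γ * (∑ p, min ((Nbr j).inf' (hNbr j) fun k => μ t k p ω) (π (t+1) j p ω))
          ≤ γ * 1 := mul_le_mul_of_nonneg_left hZle1 hγ0.le
        _ = γ := mul_one γ
        _ ≤ _ := hnum
  -- lower bound on denominators
  have hZγ : ∀ t j, γ ≤ ∑ p, min ((Nbr j).inf' (hNbr j) fun k => μ t k p ω) (π (t+1) j p ω) := by
    intro t j
    have h1 : γ ≤ min ((Nbr j).inf' (hNbr j) fun k => μ t k θstar ω) (π (t+1) j θstar ω) :=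
      le_min (Finset.le_inf' _ _ fun k _ => hμlb t k)
        (le_trans (min_le_right _ _) (hαlb j (t+1)))
    refine le_trans h1 (Finset.single_le_sum
      (f := fun p => min ((Nbr j).inf' (hNbr j) fun k => μ t k p ω) (π (t+1) j p ω))
      (fun p _ => ?_) (Finset.mem_univ θstar))
    exact (lt_min ((Finset.lt_inf'_iff _).2 fun k _ => hμpos t k p ω) (hπpos _ _ _ _)).le
  -- two upper bounds on μ
  have hub_pi : ∀ t j θp, μ (t+1) j θp ω ≤ π (t+1) j θp ω / γ := by
    intro t j θp
    rw [hμrec]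
    exact div_le_div₀ (hπpos (t+1) j θp ω).le (min_le_right _ _) hγ0 (hZγ t j)
  have hub_nbr : ∀ t j k θp, k ∈ Nbr j → μ (t+1) j θp ω ≤ μ t k θp ω / γ := by
    intro t j k θp hk
    rw [hμrec]
    exact div_le_div₀ (hμpos t k θp ω).le
      (le_trans (min_le_left _ _) (Finset.inf'_le _ hk)) hγ0 (hZγ t j)
  -- each wrong hypothesis dies out at each agent
  have hdecay : ∀ θp, θp ≠ θstar → ∀ j, Tendsto (fun t => μ t j θp ω) atTop (𝓝 0) := by
    intro θp hθp
    -- exponential decay at source agents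
    have hsrc : ∀ j, 0 < ∑ w, l j w θstar * Real.log (l j w θstar / l j w θp) →
        ∃ C r T, 0 < C ∧ 0 < r ∧ r < 1 ∧ ∀ t ≥ T, μ t j θp ω ≤ C * r ^ t := by
      intro j hD
      set m : ℝ := ∑ w, l j w θstar * Real.log (l j w θp / l j w θstar) with hmdef
      have hmneg : m < 0 := by rw [hmdef, hmD]; linarith
      have hev : ∀ᶠ n : ℕ in atTop,
          (n:ℝ)⁻¹ * ∑ k ∈ Finset.range n, X j θp k ω < m / 2 :=
        (hω j θp).eventually_lt_const (by linarith)
      obtain ⟨T, hT⟩ := eventually_atTop.1 (hev.and (eventually_ge_atTop 1))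
      set C : ℝ := π 0 j θp ω / π 0 j θstar ω with hCdef
      have hC0 : 0 < C := div_pos (hπpos 0 j θp ω) (hπpos 0 j θstar ω)
      set r : ℝ := Real.exp (m / 2) with hrdef
      have hr0 : 0 < r := Real.exp_pos _
      have hr1 : r < 1 := Real.exp_lt_one_iff.2 (by linarith)
      have hπle : ∀ t ≥ T, π t j θp ω ≤ C * r ^ t := by
        intro t ht
        obtain ⟨hlt, hn1⟩ := hT t ht
        have hnpos : (0:ℝ) < (t:ℝ) := by exact_mod_cast hn1
        have hSle : ∑ k ∈ Finset.range t, X j θp k ω ≤ m / 2 * (t:ℝ) := by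
          have hfe : (t:ℝ) * ((t:ℝ)⁻¹ * ∑ k ∈ Finset.range t, X j θp k ω)
              = ∑ k ∈ Finset.range t, X j θp k ω := by
            field_simp
          nlinarith [mul_le_mul_of_nonneg_left hlt.le hnpos.le]
        have hπs1 : π t j θstar ω ≤ 1 := by
          have h1 := hπsum t j ω
          have h2 := Finset.single_le_sum (fun p _ => (hπpos t j p ω).le)
            (Finset.mem_univ θstar)
          linarith
        have hstep1 : π t j θp ω ≤ C * Real.exp (∑ k ∈ Finset.range t, X j θp k ω) := by
          have he1 : π t j θp ω = (π t j θp ω / π t j θstar ω) * π t j θstar ω :=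
            (div_mul_cancel₀ _ (hπpos t j θstar ω).ne').symm
          calc π t j θp ω = (π t j θp ω / π t j θstar ω) * π t j θstar ω := he1
            _ ≤ (π t j θp ω / π t j θstar ω) * 1 :=
              mul_le_mul_of_nonneg_left hπs1
                (div_nonneg (hπpos t j θp ω).le (hπpos t j θstar ω).le)
            _ = C * Real.exp (∑ k ∈ Finset.range t, X j θp k ω) := by
              rw [mul_one, hRform j θp ω t]
        have hstep2 : Real.exp (∑ k ∈ Finset.range t, X j θp k ω) ≤ r ^ t := by
          rw [hrdef, ← Real.exp_nat_mul]
          exact Real.exp_le_exp.2 (by rw [mul_comm]; exact hSle)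
        calc π t j θp ω ≤ C * Real.exp (∑ k ∈ Finset.range t, X j θp k ω) := hstep1
          _ ≤ C * r ^ t := mul_le_mul_of_nonneg_left hstep2 hC0.le
      refine ⟨C / γ, r, T + 1, div_pos hC0 hγ0, hr0, hr1, ?_⟩
      intro t ht
      obtain ⟨u, rfl⟩ : ∃ u, t = u + 1 := ⟨t - 1, by omega⟩
      calc μ (u+1) j θp ω ≤ π (u+1) j θp ω / γ := hub_pi u j θp
        _ ≤ (C * r ^ (u+1)) / γ := by gcongr; exact hπle (u+1) (by omega)
        _ = C / γ * r ^ (u+1) := by ring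
    -- propagate decay along the network
    have hprop : ∀ j, ∃ C r T, 0 < C ∧ 0 < r ∧ r < 1 ∧ ∀ t ≥ T, μ t j θp ω ≤ C * r ^ t := by
      intro j
      obtain ⟨j0, hj0D, hpath⟩ :
          ∃ j0, (0 < ∑ w, l j0 w θstar * Real.log (l j0 w θstar / l j0 w θp)) ∧
            Relation.ReflTransGen (fun a b => a ∈ Nbr b) j0 j := by
        by_cases hD : 0 < ∑ w, l j w θstar * Real.log (l j w θstar / l j w θp)
        · exact ⟨j, hD, Relation.ReflTransGen.refl⟩
        · exact hreach θstar θp (Ne.symm hθp) j hD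
      induction hpath with
      | refl => exact hsrc j0 hj0D
      | @tail b c _ hstep ih =>
        obtain ⟨C, r, T, hC, hr0, hr1, hb⟩ := ih
        refine ⟨C / (γ * r), r, T + 1, by positivity, hr0, hr1, ?_⟩
        intro t ht
        obtain ⟨u, rfl⟩ : ∃ u, t = u + 1 := ⟨t - 1, by omega⟩
        have heq : C / (γ * r) * r ^ (u + 1) = C * r ^ u / γ := by
          rw [pow_succ]
          field_simp
        rw [heq]
        calc μ (u+1) c θp ω ≤ μ u b θp ω / γ := hub_nbr u c b θp hstep
          _ ≤ (C * r ^ u) / γ := by gcongr; exact hb u (by omega)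
    intro j
    obtain ⟨C, r, T, hC, hr0, hr1, hb⟩ := hprop j
    have hg : Tendsto (fun t : ℕ => C * r ^ t) atTop (𝓝 0) := by
      have h1 := (tendsto_pow_atTop_nhds_zero_of_lt_one hr0.le hr1).const_mul C
      simpa using h1
    exact squeeze_zero' (Filter.Eventually.of_forall fun t => (hμpos t j θp ω).le)
      (eventually_atTop.2 ⟨T, hb⟩) hg
  -- conclude
  have hfin : ∀ t, μ t i θstar ω = 1 - ∑ θp ∈ Finset.univ.erase θstar, μ t i θp ω := by
    intro t
    have h1 := Finset.add_sum_erase Finset.univ (fun θp => μ t i θp ω) (Finset.mem_univ θstar)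
    rw [hμsum t i ω] at h1
    linarith
  have hsum0 : Tendsto (fun t => ∑ θp ∈ Finset.univ.erase θstar, μ t i θp ω) atTop (𝓝 0) := by
    have h1 := tendsto_finset_sum (Finset.univ.erase θstar)
      (fun θp hθp => hdecay θp (Finset.ne_of_mem_erase hθp) i)
    simpa using h1
  have h2 : Tendsto (fun t => 1 - ∑ θp ∈ Finset.univ.erase θstar, μ t i θp ω) atTop (𝓝 (1 - 0)) :=
    tendsto_const_nhds.sub hsum0
  simp only [sub_zero] at h2
  exact h2.congr fun t => (hfin t).symm
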